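/- Let Q : [k] → Y be a channel over finite Y, ε > 0, satisfying Q(y|1) ≤ e^ε Q(y|i) for all i ∈ {s+1, ..., s+k'} and y ∈ Y, where k = s + k'. Then Σ_{i=1}^{k'} Σ_{y∈Y} (Q(y|s+i) − Q(y|1))² / (Σ_{j=1}^{k} Q(y|j)) ≤ (e^ε − 1) + k(1 − e^{−ε}) (and is hence O(εk) for ε = O(1)). -/

import Mathlib

/-- Chi-square-type bound for high-low LDP channels: if the first input
satisfies `Q(y|1) ≤ e^ε Q(y|s+i)` against every non-sensitive input, then the
normalized squared-difference sum is at most `(e^ε - 1) + k (1 - e^{-ε})`,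
where `k = s + k'`. -/
theorem highLow_chiSquare_bound
    (s k' : ℕ) (hs : 0 < s) (hk' : 0 < k')
    {Y : Type*} [Fintype Y]
    (Q : Fin (s + k') → Y → ℝ) (ε : ℝ) (hε : 0 < ε)
    (hQ0 : ∀ j y, 0 ≤ Q j y) (hQ1 : ∀ j, ∑ y, Q j y = 1)
    (hLDP : ∀ (i : Fin k') (y : Y),
      Q ⟨0, by omega⟩ y ≤ Real.exp ε * Q (Fin.natAdd s i) y) :
    ∑ i : Fin k', ∑ y : Y,
        (Q (Fin.natAdd s i) y - Q ⟨0, by omega⟩ y) ^ 2 / (∑ j, Q j y)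
      ≤ (Real.exp ε - 1) + (s + k' : ℝ) * (1 - Real.exp (-ε)) := by
  set e1 : Fin (s + k') := ⟨0, by omega⟩ with he1
  set c : ℝ := Real.exp (-ε) with hc
  have hc_pos : 0 < c := Real.exp_pos _
  have hc_le : c ≤ 1 := Real.exp_le_one_iff.mpr (by linarith)
  have hec : Real.exp ε * c = 1 := by
    rw [hc, ← Real.exp_add]; simp
  have hD0 : ∀ y : Y, (0:ℝ) ≤ ∑ j, Q j y :=
    fun y => Finset.sum_nonneg fun j _ => hQ0 j y
  have hTD : ∀ y : Y, ∑ i : Fin k', Q (Fin.natAdd s i) y ≤ ∑ j, Q j y := by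
    intro y
    rw [Fin.sum_univ_add (f := fun j => Q j y)]
    have h1 : (0:ℝ) ≤ ∑ i : Fin s, Q (Fin.castAdd k' i) y :=
      Finset.sum_nonneg fun i _ => hQ0 _ y
    linarith
  have key : ∀ y : Y,
      ∑ i : Fin k', (Q (Fin.natAdd s i) y - Q e1 y) ^ 2 / (∑ j, Q j y) ≤
      (∑ i : Fin k', (Q (Fin.natAdd s i) y - c * Q e1 y))
        + (Real.exp ε - 1) * Q e1 y := by
    intro y
    rcases eq_or_lt_of_le (hD0 y) with h0 | hpos
    · -- all probabilities vanish at y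
      have hz : ∀ j, Q j y = 0 := by
        intro j
        have := (Finset.sum_eq_zero_iff_of_nonneg (fun j _ => hQ0 j y)).mp h0.symm
        exact this j (Finset.mem_univ j)
      simp [hz]
    · set D : ℝ := ∑ j, Q j y with hDdef
      have hb : 0 ≤ Q e1 y := hQ0 e1 y
      have step1 : ∀ i : Fin k',
          (Q (Fin.natAdd s i) y - Q e1 y) ^ 2 / D ≤
          (Q (Fin.natAdd s i) y - c * Q e1 y) + (1 - c) * Q e1 y ^ 2 / D := by
        intro i
        set a : ℝ := Q (Fin.natAdd s i) y with ha
        set b : ℝ := Q e1 y with hbdef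
        have ha0 : 0 ≤ a := hQ0 _ y
        have haD : a ≤ D :=
          Finset.single_le_sum (fun j _ => hQ0 j y) (Finset.mem_univ (Fin.natAdd s i))
        have hLDPi : b ≤ Real.exp ε * a := hLDP i y
        have hcb : c * b ≤ a := by nlinarith [Real.exp_pos ε]
        have hnum : (a - b) ^ 2 ≤ a * (a - c * b) + (1 - c) * b ^ 2 := by
          nlinarith [mul_nonneg hb (sub_nonneg.mpr hcb),
            mul_nonneg (sub_nonneg.mpr hc_le) (mul_nonneg ha0 hb)]
        have h1 : (a - b) ^ 2 / D ≤ (a * (a - c * b) + (1 - c) * b ^ 2) / D :=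
          div_le_div_of_nonneg_right hnum hpos.le
        have h2 : a * (a - c * b) / D ≤ a - c * b := by
          rw [div_le_iff₀ hpos]
          nlinarith [mul_nonneg (sub_nonneg.mpr hcb) (sub_nonneg.mpr haD)]
        calc (a - b) ^ 2 / D ≤ (a * (a - c * b) + (1 - c) * b ^ 2) / D := h1
          _ = a * (a - c * b) / D + (1 - c) * b ^ 2 / D := by rw [add_div]
          _ ≤ (a - c * b) + (1 - c) * b ^ 2 / D := by linarith
      have hsum := Finset.sum_le_sum fun i (_ : i ∈ Finset.univ) => step1 i
      have hkb : (k' : ℝ) * Q e1 y ≤ Real.exp ε * D := by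
        have h1 : ∑ _i : Fin k', Q e1 y ≤ ∑ i : Fin k', Real.exp ε * Q (Fin.natAdd s i) y :=
          Finset.sum_le_sum fun i _ => hLDP i y
        have h2 : ∑ _i : Fin k', Q e1 y = (k' : ℝ) * Q e1 y := by
          simp [Finset.sum_const, nsmul_eq_mul]
        have h3 : ∑ i : Fin k', Real.exp ε * Q (Fin.natAdd s i) y
            = Real.exp ε * ∑ i : Fin k', Q (Fin.natAdd s i) y := by
          rw [Finset.mul_sum]
        have h4 := hTD y
        have h5 : 0 < Real.exp ε := Real.exp_pos _
        rw [h2, h3] at h1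
        nlinarith
      have htail : (k' : ℝ) * ((1 - c) * Q e1 y ^ 2 / D) ≤ (Real.exp ε - 1) * Q e1 y := by
        rw [mul_div_assoc', div_le_iff₀ hpos]
        have h6 : 0 ≤ (1 - c) * Q e1 y := mul_nonneg (by linarith) hb
        nlinarith [mul_nonneg h6 (sub_nonneg.mpr hkb), hec,
          mul_nonneg hb hpos.le]
      calc ∑ i : Fin k', (Q (Fin.natAdd s i) y - Q e1 y) ^ 2 / D
          ≤ ∑ i : Fin k', ((Q (Fin.natAdd s i) y - c * Q e1 y) + (1 - c) * Q e1 y ^ 2 / D) :=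
            hsum
        _ = (∑ i : Fin k', (Q (Fin.natAdd s i) y - c * Q e1 y))
              + (k' : ℝ) * ((1 - c) * Q e1 y ^ 2 / D) := by
            rw [Finset.sum_add_distrib]
            simp [Finset.sum_const, nsmul_eq_mul]
        _ ≤ (∑ i : Fin k', (Q (Fin.natAdd s i) y - c * Q e1 y))
              + (Real.exp ε - 1) * Q e1 y := by linarith
  have hA : ∑ y, ∑ i : Fin k', (Q (Fin.natAdd s i) y - c * Q e1 y) = (k' : ℝ) * (1 - c) := by
    rw [Finset.sum_comm]
    have hi : ∀ i : Fin k', ∑ y, (Q (Fin.natAdd s i) y - c * Q e1 y) = 1 - c := by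
      intro i
      rw [Finset.sum_sub_distrib, ← Finset.mul_sum, hQ1, hQ1, mul_one]
    rw [Finset.sum_congr rfl fun i _ => hi i]
    simp [Finset.sum_const, nsmul_eq_mul]
    ring
  have hB : ∑ y, (Real.exp ε - 1) * Q e1 y = Real.exp ε - 1 := by
    rw [← Finset.mul_sum, hQ1, mul_one]
  calc ∑ i : Fin k', ∑ y : Y, (Q (Fin.natAdd s i) y - Q e1 y) ^ 2 / (∑ j, Q j y)
      = ∑ y : Y, ∑ i : Fin k', (Q (Fin.natAdd s i) y - Q e1 y) ^ 2 / (∑ j, Q j y) := Finset.sum_comm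
    _ ≤ ∑ y : Y, ((∑ i : Fin k', (Q (Fin.natAdd s i) y - c * Q e1 y))
          + (Real.exp ε - 1) * Q e1 y) :=
        Finset.sum_le_sum fun y _ => key y
    _ = (k' : ℝ) * (1 - c) + (Real.exp ε - 1) := by
        rw [Finset.sum_add_distrib, hA, hB]
    _ ≤ (Real.exp ε - 1) + (s + k' : ℝ) * (1 - c) := by
        have hs0 : (0:ℝ) ≤ (s : ℝ) := Nat.cast_nonneg s
        nlinarith
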